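/- arXiv:2410.06296 — 3 statements merged into one kernel-verified Lean document; each statement's English description precedes it below -/
import Mathlib

section
/- Let X and Y be measurable spaces, let D be a probability measure on X × Y, let n ∈ ℕ, and let ε, δ ∈ (0,1). Let τ_1 > τ_2 > ... > τ_k be finitely many candidate thresholds, and for each i ∈ [k] let C_i : X → Set Y be a prediction-set map such that the event {(x,y) : y ∈ C_i(x)} is measurable. Let ℓ̂ = max{ ℓ ∈ ℕ : F(ℓ; n, ε) < δ }, where F(ℓ; n, p) = Σ_{j=0}^{ℓ} (n choose j) p^j (1−p)^{n−j} is the binomial CDF, and assume this set is nonempty so ℓ̂ is well-defined. For a calibration set Z = ((x_1,y_1),...,(x_n,y_n)), define the PAC test φ(Z, τ_i) = 1 if and only if #{j ∈ [n] : y_j ∉ C_i(x_j)} ≤ ℓ̂. Define the selected index î(Z) = max{ i ∈ [k] : φ(Z, τ_{i'}) = 1 for all i' ≤ i }, with the convention that the predictor outputs the full label space Y when this set is empty. Then with D^n-probability at least 1 − δ over the calibration set Z, the selected predictor satisfies D({(x,y) : y ∈ C_{î(Z)}(x)}) ≥ 1 − ε. -/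
open scoped Classical
open MeasureTheory
open scoped ENNReal

/-- The binomial CDF `F(ℓ; n, p) = Σ_{j=0}^{ℓ} (n choose j) p^j (1−p)^{n−j}`. -/
def binCDF (n : ℕ) (p : ℝ) (ℓ : ℕ) : ℝ :=
  ∑ j ∈ Finset.range (ℓ + 1), (n.choose j : ℝ) * p ^ j * (1 - p) ^ (n - j)

/-- The PAC statistical test: `φ(Z, τ_i) = 1` iff the number of calibration
examples `(x_j, y_j)` with `y_j ∉ C_i(x_j)` is at most `ℓ̂`. -/
def pacTest {X Y : Type*} {n : ℕ} (lhat : ℕ) {k : ℕ}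
    (C : Fin k → X → Set Y) (Z : Fin n → X × Y) (i : Fin k) : Prop :=
  (Finset.univ.filter fun j : Fin n => (Z j).2 ∉ C i (Z j).1).card ≤ lhat

/-- The prediction set of the selected index `î(Z) = max { i | ∀ i' ≤ i, φ(Z, τ_{i'}) = 1 }`,
with the convention that the predictor outputs the full label space when this set is empty. -/
noncomputable def pacSelectedPredSet {X Y : Type*} {n : ℕ} (lhat : ℕ) {k : ℕ}
    (C : Fin k → X → Set Y) (Z : Fin n → X × Y) (x : X) : Set Y :=
  if h : (Finset.univ.filter fun i : Fin k =>
      ∀ i' ≤ i, pacTest lhat C Z i').Nonempty then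
    C ((Finset.univ.filter fun i : Fin k => ∀ i' ≤ i, pacTest lhat C Z i').max' h) x
  else Set.univ

/-! ### Auxiliary lemmas: monotonicity of the binomial CDF in `p` -/

lemma pacAux_sum_deriv (n : ℕ) (p : ℝ) : ∀ ℓ, ℓ < n →
    ∑ j ∈ Finset.range (ℓ+1), ((n.choose j : ℝ) * ((j : ℝ) * p ^ (j-1) * (1-p) ^ (n-j)
        + p ^ j * (((n-j : ℕ) : ℝ) * (1-p) ^ (n-j-1) * (-1))))
    = -((n : ℝ) * ((n-1).choose ℓ : ℝ) * p^ℓ * (1-p)^(n-1-ℓ))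
  | 0, h => by
      simp only [zero_add, Finset.sum_range_one, Nat.choose_zero_right, Nat.cast_zero,
        Nat.cast_one, pow_zero, Nat.sub_zero]
      ring
  | (ℓ+1), h => by
      rw [Finset.sum_range_succ, pacAux_sum_deriv n p ℓ (by omega)]
      have hA : (n : ℝ) * ((n-1).choose ℓ : ℝ) = (n.choose (ℓ+1) : ℝ) * ((ℓ:ℝ)+1) := by
        have := Nat.add_one_mul_choose_eq (n-1) ℓ
        rw [Nat.sub_add_cancel (by omega)] at this
        exact_mod_cast congrArg (Nat.cast : ℕ → ℝ) this
      have hB : (n.choose (ℓ+1) : ℝ) * ((n - 1 - ℓ : ℕ) : ℝ)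
          = (n : ℝ) * ((n-1).choose (ℓ+1) : ℝ) := by
        have h1 := Nat.add_one_mul_choose_eq (n-1) (ℓ+1)
        rw [Nat.sub_add_cancel (by omega)] at h1
        have h2 := Nat.choose_succ_right_eq n (ℓ+1)
        have h3 : n.choose (ℓ+1) * (n - 1 - ℓ) = n * (n-1).choose (ℓ+1) := by
          rw [show n - 1 - ℓ = n - (ℓ+1) by omega, ← h2, ← h1]
        exact_mod_cast congrArg (Nat.cast : ℕ → ℝ) h3
      have e2 : n - (ℓ+1) - 1 = n - 1 - (ℓ+1) := by omega
      have e1 : n - (ℓ+1) = n - 1 - ℓ := by omega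
      rw [e2, e1, show (ℓ+1) - 1 = ℓ by omega]
      push_cast
      push_cast at hB
      linear_combination -(p^ℓ * (1-p)^(n-1-ℓ)) * hA - (p^(ℓ+1) * (1-p)^(n-1-(ℓ+1))) * hB

lemma pacAux_term_hasDerivAt (n j : ℕ) (p : ℝ) :
    HasDerivAt (fun x : ℝ => (n.choose j : ℝ) * x ^ j * (1 - x) ^ (n - j))
      ((n.choose j : ℝ) * ((j : ℝ) * p ^ (j-1) * (1-p) ^ (n-j)
        + p ^ j * (((n-j : ℕ) : ℝ) * (1-p) ^ (n-j-1) * (-1)))) p := by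
  have h1 : HasDerivAt (fun x : ℝ => (1 : ℝ) - x) (-1) p := (hasDerivAt_id p).const_sub 1
  have h2 : HasDerivAt (fun x : ℝ => (1 - x) ^ (n - j))
      (((n-j : ℕ) : ℝ) * (1-p)^(n-j-1) * (-1)) p := h1.pow (n - j)
  have h3 := (hasDerivAt_pow j p).mul h2
  have h4 := h3.const_mul ((n.choose j : ℝ))
  exact h4.congr_of_eventuallyEq (Filter.Eventually.of_forall fun x => by
    simp only [Pi.mul_apply]
    ring)

lemma pacAux_binCDF_hasDerivAt (n ℓ : ℕ) (hℓ : ℓ < n) (p : ℝ) :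
    HasDerivAt (fun p => binCDF n p ℓ)
      (-((n : ℝ) * ((n-1).choose ℓ : ℝ) * p^ℓ * (1-p)^(n-1-ℓ))) p := by
  have h := HasDerivAt.fun_sum (u := Finset.range (ℓ+1))
    (fun j _ => pacAux_term_hasDerivAt n j p)
  rw [pacAux_sum_deriv n p ℓ hℓ] at h
  exact h

lemma pacAux_binCDF_antitoneOn (n ℓ : ℕ) (hℓ : ℓ < n) :
    AntitoneOn (fun p => binCDF n p ℓ) (Set.Icc 0 1) := by
  have hdiff : Differentiable ℝ (fun p => binCDF n p ℓ) :=
    fun p => (pacAux_binCDF_hasDerivAt n ℓ hℓ p).differentiableAt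
  apply antitoneOn_of_deriv_nonpos (convex_Icc 0 1) hdiff.continuous.continuousOn
    (hdiff.differentiableOn)
  intro x hx
  rw [interior_Icc, Set.mem_Ioo] at hx
  rw [(pacAux_binCDF_hasDerivAt n ℓ hℓ x).deriv]
  have h1 : (0:ℝ) ≤ x := le_of_lt hx.1
  have h2 : (0:ℝ) ≤ 1 - x := by linarith [hx.2]
  have : (0:ℝ) ≤ (n : ℝ) * ((n-1).choose ℓ : ℝ) * x^ℓ * (1-x)^(n-1-ℓ) := by positivity
  linarith

lemma pacAux_binCDF_eq_one (n ℓ : ℕ) (hn : n ≤ ℓ) (ε : ℝ) : binCDF n ε ℓ = 1 := by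
  unfold binCDF
  rw [← Finset.sum_subset (Finset.range_subset_range.mpr (by omega) :
      Finset.range (n+1) ⊆ Finset.range (ℓ+1))]
  · have h := add_pow ε (1 - ε) n
    simp only [add_sub_cancel, one_pow] at h
    calc ∑ x ∈ Finset.range (n+1), (n.choose x : ℝ) * ε ^ x * (1 - ε) ^ (n - x)
        = ∑ m ∈ Finset.range (n+1), ε ^ m * (1 - ε) ^ (n - m) * (n.choose m : ℝ) :=
          Finset.sum_congr rfl (fun j _ => by ring)
      _ = 1 := h.symm
  · intro j hj hj'
    rw [Finset.mem_range] at hj hj'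
    rw [Nat.choose_eq_zero_of_lt (by omega)]
    simp

/-! ### Auxiliary lemmas: binomial law of the miscoverage count under the product measure -/

section count
variable {Ω : Type*} [MeasurableSpace Ω]

omit [MeasurableSpace Ω] in
lemma pacAux_mem_pi_ite_iff {M : Set Ω} {n : ℕ} (S : Finset (Fin n)) (Z : Fin n → Ω) :
    Z ∈ Set.pi Set.univ (fun j => if j ∈ S then M else Mᶜ) ↔
      Finset.univ.filter (fun j => Z j ∈ M) = S := by
  rw [Set.mem_univ_pi, Finset.ext_iff]
  constructor
  · intro h j
    have := h j
    by_cases hj : j ∈ S <;> simp only [hj, if_true, if_false] at this <;>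
      simp [hj] <;> simpa using this
  · intro h j
    have := h j
    simp only [Finset.mem_filter, Finset.mem_univ, true_and] at this
    by_cases hj : j ∈ S <;> simp only [hj, if_true, if_false]
    · exact this.mpr hj
    · exact fun hc => hj (this.mp hc)

lemma pacAux_count_set_eq_biUnion {M : Set Ω} (n ℓ : ℕ) :
    {Z : Fin n → Ω | (Finset.univ.filter fun j => Z j ∈ M).card = ℓ}
      = ⋃ S ∈ Finset.powersetCard ℓ (Finset.univ : Finset (Fin n)),
          Set.pi Set.univ (fun j => if j ∈ S then M else Mᶜ) := by
  ext Z
  simp only [Set.mem_setOf_eq, Set.mem_iUnion, pacAux_mem_pi_ite_iff,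
    Finset.mem_powersetCard, exists_prop]
  constructor
  · intro h
    exact ⟨Finset.univ.filter (fun j => Z j ∈ M), ⟨Finset.subset_univ _, h⟩, rfl⟩
  · rintro ⟨S, ⟨-, hcard⟩, hfS⟩
    rw [hfS]; exact hcard

lemma pacAux_count_set_measurable {M : Set Ω} (hM : MeasurableSet M) (n ℓ : ℕ) :
    MeasurableSet {Z : Fin n → Ω | (Finset.univ.filter fun j => Z j ∈ M).card = ℓ} := by
  rw [pacAux_count_set_eq_biUnion]
  exact Finset.measurableSet_biUnion _
    (fun S _ => MeasurableSet.univ_pi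
      (fun j => by by_cases hj : j ∈ S <;> simp [hj, hM, hM.compl]))

lemma pacAux_count_le_set_eq_biUnion {M : Set Ω} (n l : ℕ) :
    {Z : Fin n → Ω | (Finset.univ.filter fun j => Z j ∈ M).card ≤ l}
      = ⋃ ℓ ∈ Finset.range (l+1),
          {Z : Fin n → Ω | (Finset.univ.filter fun j => Z j ∈ M).card = ℓ} := by
  ext Z
  simp only [Set.mem_setOf_eq, Set.mem_iUnion, Finset.mem_range, exists_prop]
  constructor
  · intro h; exact ⟨_, by omega, rfl⟩
  · rintro ⟨ℓ, hℓ, h⟩; omega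

lemma pacAux_count_le_set_measurable {M : Set Ω} (hM : MeasurableSet M) (n l : ℕ) :
    MeasurableSet {Z : Fin n → Ω | (Finset.univ.filter fun j => Z j ∈ M).card ≤ l} := by
  rw [pacAux_count_le_set_eq_biUnion]
  exact Finset.measurableSet_biUnion _ (fun ℓ _ => pacAux_count_set_measurable hM n ℓ)

lemma pacAux_measure_count_eq (μ : Measure Ω) [IsProbabilityMeasure μ]
    {M : Set Ω} (hM : MeasurableSet M) (n ℓ : ℕ) :
    Measure.pi (fun _ : Fin n => μ) {Z | (Finset.univ.filter fun j => Z j ∈ M).card = ℓ}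
      = (n.choose ℓ : ℝ≥0∞) * (μ M)^ℓ * (1 - μ M)^(n-ℓ) := by
  rw [pacAux_count_set_eq_biUnion, measure_biUnion_finset]
  · have hmeas1 : ∀ S : Finset (Fin n),
        Measure.pi (fun _ : Fin n => μ) (Set.pi Set.univ (fun j => if j ∈ S then M else Mᶜ))
          = (μ M)^S.card * (1 - μ M)^(n - S.card) := by
      intro S
      rw [Measure.pi_pi]
      have : ∀ j : Fin n, μ (if j ∈ S then M else Mᶜ) = if j ∈ S then μ M else 1 - μ M := by
        intro j
        by_cases hj : j ∈ S <;> simp [hj, prob_compl_eq_one_sub hM]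
      rw [Finset.prod_congr rfl (fun j _ => this j), Finset.prod_ite, Finset.prod_const,
        Finset.prod_const]
      have hc1 : (Finset.filter (fun x => x ∈ S) Finset.univ).card = S.card := by
        rw [Finset.filter_univ_mem]
      have hc2 : (Finset.filter (fun x => x ∉ S) Finset.univ).card = n - S.card := by
        rw [Finset.filter_not, Finset.filter_univ_mem,
          Finset.card_sdiff_of_subset (Finset.subset_univ S), Finset.card_univ, Fintype.card_fin]
      rw [hc1, hc2]
    rw [Finset.sum_congr rfl (fun S hS => by
      rw [hmeas1 S, (Finset.mem_powersetCard.mp hS).2])]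
    rw [Finset.sum_const, Finset.card_powersetCard, Finset.card_univ, Fintype.card_fin,
      nsmul_eq_mul, mul_assoc]
  · intro S hS T hT hST
    rw [Function.onFun, Set.disjoint_left]
    intro Z hZS hZT
    have h1 := (pacAux_mem_pi_ite_iff S Z).mp hZS
    have h2 := (pacAux_mem_pi_ite_iff T Z).mp hZT
    exact hST (h1.symm.trans h2)
  · intro S hS
    exact MeasurableSet.univ_pi (fun j => by by_cases hj : j ∈ S <;> simp [hj, hM, hM.compl])

lemma pacAux_measure_count_le (μ : Measure Ω) [IsProbabilityMeasure μ]
    {M : Set Ω} (hM : MeasurableSet M) (n l : ℕ) :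
    Measure.pi (fun _ : Fin n => μ) {Z | (Finset.univ.filter fun j => Z j ∈ M).card ≤ l}
      = ∑ ℓ ∈ Finset.range (l+1), (n.choose ℓ : ℝ≥0∞) * (μ M)^ℓ * (1 - μ M)^(n-ℓ) := by
  rw [pacAux_count_le_set_eq_biUnion, measure_biUnion_finset]
  · exact Finset.sum_congr rfl (fun ℓ _ => pacAux_measure_count_eq μ hM n ℓ)
  · intro a _ b _ hab
    rw [Function.onFun, Set.disjoint_left]
    intro Z hZa hZb
    exact hab (hZa.symm.trans hZb)
  · exact fun ℓ _ => pacAux_count_set_measurable hM n ℓ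

lemma pacAux_measure_count_le_ofReal (μ : Measure Ω) [IsProbabilityMeasure μ]
    {M : Set Ω} (hM : MeasurableSet M) (n l : ℕ) :
    Measure.pi (fun _ : Fin n => μ) {Z | (Finset.univ.filter fun j => Z j ∈ M).card ≤ l}
      = ENNReal.ofReal (binCDF n (μ M).toReal l) := by
  rw [pacAux_measure_count_le μ hM n l, binCDF]
  have hq0 : (0:ℝ) ≤ (μ M).toReal := ENNReal.toReal_nonneg
  have hq1 : (μ M).toReal ≤ 1 := by
    have := prob_le_one (μ := μ) (s := M)
    exact ENNReal.toReal_le_of_le_ofReal zero_le_one (by simpa using this)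
  rw [ENNReal.ofReal_sum_of_nonneg (fun j _ => mul_nonneg
    (mul_nonneg (by positivity) (by positivity)) (pow_nonneg (by linarith) _))]
  refine Finset.sum_congr rfl (fun ℓ _ => ?_)
  have hqr : ENNReal.ofReal ((μ M).toReal) = μ M := ENNReal.ofReal_toReal (measure_ne_top μ M)
  have h1q : ENNReal.ofReal (1 - (μ M).toReal) = 1 - μ M := by
    rw [ENNReal.ofReal_sub _ hq0, ENNReal.ofReal_one, hqr]
  rw [ENNReal.ofReal_mul (by positivity), ENNReal.ofReal_mul (by positivity),
    ENNReal.ofReal_pow hq0, ENNReal.ofReal_pow (by linarith), ENNReal.ofReal_natCast,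
    hqr, h1q]

end count

/-- PAC (training-conditional) coverage guarantee for the sequential threshold-selection
algorithm: with probability at least `1 - δ` over the calibration set `Z ~ D^n`, the selected
predictor has coverage probability at least `1 - ε` on a fresh example. -/
theorem pac_coverage
    {X Y : Type*} [MeasurableSpace X] [MeasurableSpace Y]
    (D : Measure (X × Y)) [IsProbabilityMeasure D]
    (n k : ℕ) (ε δ : ℝ) (hε : ε ∈ Set.Ioo (0 : ℝ) 1) (hδ : δ ∈ Set.Ioo (0 : ℝ) 1)
    (τ : Fin k → ℝ) (hτ : StrictAnti τ)
    (C : Fin k → X → Set Y)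
    (hC : ∀ i, MeasurableSet {p : X × Y | p.2 ∈ C i p.1})
    (lhat : ℕ) (hlhat : IsGreatest {ℓ : ℕ | binCDF n ε ℓ < δ} lhat) :
    ENNReal.ofReal (1 - δ) ≤
      (Measure.pi fun _ : Fin n => D)
        {Z : Fin n → X × Y |
          ENNReal.ofReal (1 - ε) ≤ D {p : X × Y | p.2 ∈ pacSelectedPredSet lhat C Z p.1}} := by
  obtain ⟨hε0, hε1⟩ := hε
  obtain ⟨hδ0, hδ1⟩ := hδ
  set μn := Measure.pi fun _ : Fin n => D with hμn
  haveI : IsProbabilityMeasure μn := MeasureTheory.Measure.pi.instIsProbabilityMeasure _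
  -- lhat < n
  have hlt : lhat < n := by
    by_contra hc
    have := pacAux_binCDF_eq_one n lhat (by omega) ε
    have h1 := hlhat.1
    rw [Set.mem_setOf_eq, this] at h1
    linarith
  -- if an index has small miscoverage, it is good
  have hgood : ∀ i : Fin k, D {p : X × Y | p.2 ∉ C i p.1} ≤ ENNReal.ofReal ε →
      ENNReal.ofReal (1 - ε) ≤ D {p : X × Y | p.2 ∈ C i p.1} := by
    intro i hi
    have hcompl : {p : X × Y | p.2 ∉ C i p.1} = {p : X × Y | p.2 ∈ C i p.1}ᶜ := rfl
    have hmiss : D {p : X × Y | p.2 ∉ C i p.1} = 1 - D {p : X × Y | p.2 ∈ C i p.1} := by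
      rw [hcompl, prob_compl_eq_one_sub (hC i)]
    have h1 : ENNReal.ofReal (1 - ε) = 1 - ENNReal.ofReal ε := by
      rw [ENNReal.ofReal_sub _ hε0.le, ENNReal.ofReal_one]
    rw [h1]
    have h2 : 1 - D {p : X × Y | p.2 ∈ C i p.1} ≤ ENNReal.ofReal ε := hmiss ▸ hi
    have h3 := tsub_le_tsub_left h2 1
    calc 1 - ENNReal.ofReal ε ≤ 1 - (1 - D {p : X × Y | p.2 ∈ C i p.1}) := h3
      _ ≤ D {p : X × Y | p.2 ∈ C i p.1} := tsub_tsub_le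
  -- key: if every index passing all tests up to it has small miscoverage, Z is good
  have hkey : ∀ Z : Fin n → X × Y,
      (∀ i : Fin k, (∀ i' ≤ i, pacTest lhat C Z i') →
        D {p : X × Y | p.2 ∉ C i p.1} ≤ ENNReal.ofReal ε) →
      ENNReal.ofReal (1 - ε) ≤ D {p : X × Y | p.2 ∈ pacSelectedPredSet lhat C Z p.1} := by
    intro Z hZ
    unfold pacSelectedPredSet
    split_ifs with h
    · set i := (Finset.univ.filter fun i : Fin k => ∀ i' ≤ i, pacTest lhat C Z i').max' h with hi
      have hmem := (Finset.univ.filter fun i : Fin k =>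
        ∀ i' ≤ i, pacTest lhat C Z i').max'_mem h
      rw [← hi, Finset.mem_filter] at hmem
      exact hgood i (hZ i hmem.2)
    · simp only [Set.mem_univ, Set.setOf_true]
      rw [measure_univ]
      exact ENNReal.ofReal_le_one.mpr (by linarith)
  by_cases hB : (Finset.univ.filter fun i : Fin k =>
      ¬ D {p : X × Y | p.2 ∉ C i p.1} ≤ ENNReal.ofReal ε).Nonempty
  · -- there is a bad index; let istar be the smallest one
    set B := Finset.univ.filter fun i : Fin k =>
      ¬ D {p : X × Y | p.2 ∉ C i p.1} ≤ ENNReal.ofReal ε with hBdef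
    set istar := B.min' hB with histar
    have histar_mem := B.min'_mem hB
    have histar_bad : ¬ D {p : X × Y | p.2 ∉ C istar p.1} ≤ ENNReal.ofReal ε :=
      (Finset.mem_filter.mp histar_mem).2
    have hmin : ∀ i : Fin k, i < istar → D {p : X × Y | p.2 ∉ C i p.1} ≤ ENNReal.ofReal ε := by
      intro i hi
      by_contra hc
      exact absurd (B.min'_le i (by rw [hBdef, Finset.mem_filter]; exact ⟨Finset.mem_univ i, hc⟩))
        (not_le.mpr hi)
    obtain ⟨M, hM⟩ : ∃ M : Set (X × Y), M = {p : X × Y | p.2 ∉ C istar p.1} := ⟨_, rfl⟩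
    rw [← hM] at histar_bad
    have hMmeas : MeasurableSet M := hM ▸ (hC istar).compl
    obtain ⟨E, hE⟩ : ∃ E : Set (Fin n → X × Y),
        E = {Z | (Finset.univ.filter fun j => Z j ∈ M).card ≤ lhat} := ⟨_, rfl⟩
    have hEmeas : MeasurableSet E := hE ▸ pacAux_count_le_set_measurable hMmeas n lhat
    -- bound the measure of E
    have hq0 : (0:ℝ) ≤ (D M).toReal := ENNReal.toReal_nonneg
    have hq1 : (D M).toReal ≤ 1 := by
      have := prob_le_one (μ := D) (s := M)
      exact ENNReal.toReal_le_of_le_ofReal zero_le_one (by simpa using this)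
    have hqε : ε ≤ (D M).toReal := by
      have h1 : ENNReal.ofReal ε < D M := not_le.mp histar_bad
      have := (ENNReal.ofReal_lt_iff_lt_toReal hε0.le (measure_ne_top D M)).mp h1
      linarith
    have hEle : μn E ≤ ENNReal.ofReal δ := by
      rw [hE, hμn, pacAux_measure_count_le_ofReal D hMmeas n lhat]
      apply ENNReal.ofReal_le_ofReal
      have hanti := pacAux_binCDF_antitoneOn n lhat hlt
        (Set.mem_Icc.mpr ⟨hε0.le, hε1.le⟩) (Set.mem_Icc.mpr ⟨hq0, hq1⟩) hqε
      have := hlhat.1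
      rw [Set.mem_setOf_eq] at this
      calc binCDF n (D M).toReal lhat ≤ binCDF n ε lhat := hanti
        _ ≤ δ := this.le
    -- Eᶜ is contained in the good set
    have hsub : Eᶜ ⊆ {Z : Fin n → X × Y |
        ENNReal.ofReal (1 - ε) ≤ D {p : X × Y | p.2 ∈ pacSelectedPredSet lhat C Z p.1}} := by
      intro Z hZ
      rw [Set.mem_compl_iff, hE, Set.mem_setOf_eq, not_le] at hZ
      refine hkey Z (fun i hi => ?_)
      rcases lt_or_ge i istar with h | h
      · exact hmin i h
      · exfalso
        have htest := hi istar h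
        rw [pacTest] at htest
        have hfeq : (Finset.univ.filter fun j : Fin n => (Z j).2 ∉ C istar (Z j).1)
            = (Finset.univ.filter fun j : Fin n => Z j ∈ M) := by
          apply Finset.filter_congr
          intro j _
          simp [hM]
        rw [hfeq] at htest
        omega
    calc ENNReal.ofReal (1 - δ) = 1 - ENNReal.ofReal δ := by
          rw [ENNReal.ofReal_sub _ hδ0.le, ENNReal.ofReal_one]
      _ ≤ 1 - μn E := tsub_le_tsub_left hEle 1
      _ = μn Eᶜ := (prob_compl_eq_one_sub hEmeas).symm
      _ ≤ _ := measure_mono hsub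
  · -- no bad index: every Z is good
    have hall : ∀ i : Fin k, D {p : X × Y | p.2 ∉ C i p.1} ≤ ENNReal.ofReal ε := by
      intro i
      by_contra hc
      exact hB ⟨i, by rw [Finset.mem_filter]; exact ⟨Finset.mem_univ i, hc⟩⟩
    have huniv : {Z : Fin n → X × Y |
        ENNReal.ofReal (1 - ε) ≤ D {p : X × Y | p.2 ∈ pacSelectedPredSet lhat C Z p.1}}
          = Set.univ := by
      ext Z
      simp only [Set.mem_setOf_eq, Set.mem_univ, iff_true]
      exact hkey Z (fun i _ => hall i)
    rw [huniv, measure_univ]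
    exact ENNReal.ofReal_le_one.mpr (by linarith)
end

section
/- Let V be a finite set of vertices and E ⊆ V × V a set of directed edges (v, v') read as 'v is a parent of v''. Assume the relation R given by R v v' ↔ (v, v') ∈ E is well-founded (which holds for any finite directed acyclic graph, read in the direction from parents to children). Fix ỹ ⊆ V, and define the coverage set cov(ỹ) = { v ∈ V : ∃ u ∈ ỹ such that v is reachable from u by a (possibly empty) directed path in E }. Then a subset B ⊆ V satisfies the three conditions (i) ỹ ⊆ B, (ii) for every edge (v, v') ∈ E, v ∈ B implies v' ∈ B, and (iii) every v' ∈ B satisfies v' ∈ ỹ or has some parent v with (v, v') ∈ E and v ∈ B, if and only if B = cov(ỹ). -/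
/-- Characterization of the coverage constraints of the integer program: for a well-founded
directed edge relation `E` on a finite vertex set `V` (read from parents to children), a set
`B ⊆ V` satisfies (i) `ỹ ⊆ B`, (ii) closure under edges, and (iii) every element of `B` is in
`ỹ` or has a parent in `B`, if and only if `B` is exactly the set of vertices reachable from
`ỹ` by a (possibly empty) directed path. -/
theorem coverage_constraints_characterization {V : Type*} [Fintype V]
    (E : Set (V × V)) (hwf : WellFounded fun v v' : V => (v, v') ∈ E)
    (ytilde : Set V) (B : Set V) :
    (ytilde ⊆ B ∧
        (∀ v v' : V, (v, v') ∈ E → v ∈ B → v' ∈ B) ∧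
        (∀ v' ∈ B, v' ∈ ytilde ∨ ∃ v, (v, v') ∈ E ∧ v ∈ B)) ↔
      B = {v : V | ∃ u ∈ ytilde, Relation.ReflTransGen (fun a b : V => (a, b) ∈ E) u v} := by
  constructor
  · rintro ⟨h1, h2, h3⟩
    apply Set.Subset.antisymm
    · intro v'
      induction v' using hwf.induction with
      | _ v' ih =>
        intro hv'
        rcases h3 v' hv' with hy | ⟨v, hE, hvB⟩
        · exact ⟨v', hy, Relation.ReflTransGen.refl⟩
        · obtain ⟨u, hu, hpath⟩ := ih v hE hvB
          exact ⟨u, hu, hpath.tail hE⟩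
    · rintro v' ⟨u, hu, hpath⟩
      induction hpath with
      | refl => exact h1 hu
      | tail _ hE ih => exact h2 _ _ hE ih
  · rintro rfl
    refine ⟨fun u hu => ⟨u, hu, Relation.ReflTransGen.refl⟩, ?_, ?_⟩
    · rintro v v' hE ⟨u, hu, hpath⟩
      exact ⟨u, hu, hpath.tail hE⟩
    · rintro v' ⟨u, hu, hpath⟩
      rcases hpath.cases_tail with rfl | ⟨v, hp, hE⟩
      · exact Or.inl hu
      · exact Or.inr ⟨v, hE, u, hu, hp⟩
end

section
/- Let V be a finite set, E ⊆ V × V a well-founded directed edge relation (parents to children), L = { v ∈ V : v has no outgoing edge in E } the set of leaf nodes, p : L → ℝ≥0 a weight function, τ ∈ ℝ, and m ∈ ℕ. For ỹ ⊆ V define leaves(ỹ) = { v ∈ L : ∃ u ∈ ỹ such that v is reachable from u by a directed path in E }. Call a pair (A, B) of subsets of V IP-feasible if |A| ≤ m, A ⊆ B, B is closed under E-successors (v ∈ B and (v,v') ∈ E imply v' ∈ B), every v' ∈ B satisfies v' ∈ A or has a parent v ∈ B with (v, v') ∈ E, and Σ_{v ∈ L ∩ B} p(v) ≥ τ. Call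 ỹ ⊆ V feasible if |ỹ| ≤ m and Σ_{v ∈ leaves(ỹ)} p(v) ≥ τ. Then { |L ∩ B| : (A, B) IP-feasible } = { |leaves(ỹ)| : ỹ feasible }; in particular, the integer program's optimal objective value equals the minimum of |leaves(ỹ)| over feasible structured prediction sets ỹ, and a minimizer of one problem yields a minimizer of the other. -/
open scoped Classical NNReal

/-- The leaf nodes of a directed graph `(V, E)`: vertices with no outgoing edge. -/
def Leaves {V : Type*} (E : Set (V × V)) : Set V :=
  {v : V | ¬ ∃ v' : V, (v, v') ∈ E}

/-- `leavesOf E ỹ` is the set of leaf nodes reachable from some node of `ỹ` by a directed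
path in `E`. -/
def leavesOf {V : Type*} (E : Set (V × V)) (y : Set V) : Set V :=
  {v : V | v ∈ Leaves E ∧ ∃ u ∈ y, Relation.ReflTransGen (fun a b : V => (a, b) ∈ E) u v}

/-- The total weight `Σ_{v ∈ L ∩ B} p(v)` of the leaf nodes lying in `B`. -/
noncomputable def leafMass {V : Type*} [Fintype V] (E : Set (V × V))
    (p : ↥(Leaves E) → ℝ≥0) (B : Set V) : ℝ :=
  ∑ v : ↥(Leaves E), if (v : V) ∈ B then (p v : ℝ) else 0

/-- The pair `(A, B)` is a feasible point of the integer program: `|A| ≤ m`, `A ⊆ B`, `B` is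
closed under `E`-successors, every element of `B` is in `A` or has a parent in `B`, and the
leaf mass of `B` is at least `τ`. -/
def IPFeasible {V : Type*} [Fintype V] (E : Set (V × V)) (p : ↥(Leaves E) → ℝ≥0)
    (τ : ℝ) (m : ℕ) (A B : Set V) : Prop :=
  A.ncard ≤ m ∧ A ⊆ B ∧
    (∀ v v' : V, (v, v') ∈ E → v ∈ B → v' ∈ B) ∧
    (∀ v' ∈ B, v' ∈ A ∨ ∃ v, (v, v') ∈ E ∧ v ∈ B) ∧
    τ ≤ leafMass E p B

/-- The structured prediction set `ỹ` is feasible: `|ỹ| ≤ m` and the cumulative weight of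
the leaves covered by `ỹ` is at least `τ`. -/
def Feasible {V : Type*} [Fintype V] (E : Set (V × V)) (p : ↥(Leaves E) → ℝ≥0)
    (τ : ℝ) (m : ℕ) (y : Set V) : Prop :=
  y.ncard ≤ m ∧ τ ≤ leafMass E p (leavesOf E y)

private lemma mem_of_reach {V : Type*} {E : Set (V × V)} {B : Set V}
    (hB : ∀ v v' : V, (v, v') ∈ E → v ∈ B → v' ∈ B) {u v : V}
    (hu : u ∈ B) (h : Relation.ReflTransGen (fun a b : V => (a, b) ∈ E) u v) : v ∈ B := by
  induction h with
  | refl => exact hu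
  | tail _ he ih => exact hB _ _ he ih

private lemma leaves_inter_eq {V : Type*} {E : Set (V × V)}
    (hwf : WellFounded fun v v' : V => (v, v') ∈ E) {A B : Set V}
    (hAB : A ⊆ B)
    (hcl : ∀ v v' : V, (v, v') ∈ E → v ∈ B → v' ∈ B)
    (hpar : ∀ v' ∈ B, v' ∈ A ∨ ∃ v, (v, v') ∈ E ∧ v ∈ B) :
    Leaves E ∩ B = leavesOf E A := by
  have reach : ∀ v, v ∈ B →
      ∃ u ∈ A, Relation.ReflTransGen (fun a b : V => (a, b) ∈ E) u v := by
    intro v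
    induction v using hwf.induction with
    | _ v ih =>
      intro hv
      rcases hpar v hv with h | ⟨w, hw, hwB⟩
      · exact ⟨v, h, .refl⟩
      · obtain ⟨u, hu, hr⟩ := ih w hw hwB
        exact ⟨u, hu, hr.tail hw⟩
  ext v
  constructor
  · rintro ⟨hL, hB⟩
    obtain ⟨u, hu, hr⟩ := reach v hB
    exact ⟨hL, u, hu, hr⟩
  · rintro ⟨hL, u, hu, hr⟩
    exact ⟨hL, mem_of_reach hcl (hAB hu) hr⟩

private lemma leafMass_congr {V : Type*} [Fintype V] {E : Set (V × V)}
    (p : ↥(Leaves E) → ℝ≥0) {B B' : Set V}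
    (h : ∀ v : ↥(Leaves E), (v : V) ∈ B ↔ (v : V) ∈ B') :
    leafMass E p B = leafMass E p B' := by
  unfold leafMass
  exact Finset.sum_congr rfl fun v _ => by simp [h v]

/-- Equivalence of the integer program and the structured-prediction-set optimization
problem: the sets of achievable objective values coincide, and in particular the optimal
values coincide. -/
theorem ip_objective_values_eq {V : Type*} [Fintype V]
    (E : Set (V × V)) (hwf : WellFounded fun v v' : V => (v, v') ∈ E)
    (p : ↥(Leaves E) → ℝ≥0) (τ : ℝ) (m : ℕ) :
    {s : ℕ | ∃ A B : Set V, IPFeasible E p τ m A B ∧ (Leaves E ∩ B).ncard = s} =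
        {s : ℕ | ∃ y : Set V, Feasible E p τ m y ∧ (leavesOf E y).ncard = s} ∧
      sInf {s : ℕ | ∃ A B : Set V, IPFeasible E p τ m A B ∧ (Leaves E ∩ B).ncard = s} =
        sInf {s : ℕ | ∃ y : Set V, Feasible E p τ m y ∧ (leavesOf E y).ncard = s} := by
  have hset :
      {s : ℕ | ∃ A B : Set V, IPFeasible E p τ m A B ∧ (Leaves E ∩ B).ncard = s} =
        {s : ℕ | ∃ y : Set V, Feasible E p τ m y ∧ (leavesOf E y).ncard = s} := by
    ext s
    constructor
    · rintro ⟨A, B, ⟨hm, hAB, hcl, hpar, hτ⟩, hcard⟩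
      have hkey := leaves_inter_eq hwf hAB hcl hpar
      have hmass : leafMass E p B = leafMass E p (leavesOf E A) := by
        refine leafMass_congr p fun v => ?_
        constructor
        · intro hv
          have : (v : V) ∈ Leaves E ∩ B := ⟨v.2, hv⟩
          rw [hkey] at this; exact this
        · intro hv
          have : (v : V) ∈ Leaves E ∩ B := hkey ▸ hv
          exact this.2
      exact ⟨A, ⟨hm, hmass ▸ hτ⟩, by rw [← hkey]; exact hcard⟩
    · rintro ⟨y, ⟨hm, hτ⟩, hcard⟩
      refine ⟨y, {v : V | ∃ u ∈ y, Relation.ReflTransGen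
        (fun a b : V => (a, b) ∈ E) u v}, ⟨hm, ?_, ?_, ?_, ?_⟩, ?_⟩
      · intro v hv; exact ⟨v, hv, .refl⟩
      · rintro v v' he ⟨u, hu, hr⟩; exact ⟨u, hu, hr.tail he⟩
      · rintro v' ⟨u, hu, hr⟩
        rcases hr.cases_tail with h | ⟨w, hw, hwe⟩
        · exact Or.inl (h ▸ hu)
        · exact Or.inr ⟨w, hwe, u, hu, hw⟩
      · have : leafMass E p {v : V | ∃ u ∈ y, Relation.ReflTransGen
            (fun a b : V => (a, b) ∈ E) u v} = leafMass E p (leavesOf E y) := by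
          refine leafMass_congr p fun v => ?_
          constructor
          · intro hv; exact ⟨v.2, hv⟩
          · intro hv; exact hv.2
        rw [this]; exact hτ
      · rw [← hcard]
        congr 1
  exact ⟨hset, by rw [hset]⟩
end
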